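/- There is a constant C > 0 such that for all t ≥ s > 0 and x, y ∈ ℝ, E[(u(t,x) - u(s,y))²] ≤ C(√(t-s) + |x-y|). -/

import Mathlib

open MeasureTheory Real

lemma inv_sqrt_eq_rpow (x : ℝ) : (Real.sqrt x)⁻¹ = x ^ (-(1/2) : ℝ) := by
  rcases le_or_gt 0 x with hx | hx
  · rw [Real.sqrt_eq_rpow, ← Real.rpow_neg hx]
  · rw [Real.sqrt_eq_zero_of_nonpos hx.le, Real.rpow_def_of_neg hx]
    simp [inv_mul_eq_div, Real.cos_pi_div_two]

lemma II1 (c a b : ℝ) : IntervalIntegrable (fun r => (Real.sqrt (c - r))⁻¹) volume a b := by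
  simp only [inv_sqrt_eq_rpow]
  simpa using (intervalIntegral.intervalIntegrable_rpow'
    (a := c - a) (b := c - b) (r := (-(1/2) : ℝ)) (by norm_num)).comp_sub_left c

lemma II2 (c a b : ℝ) : IntervalIntegrable (fun r => (Real.sqrt (c - 2*r))⁻¹) volume a b := by
  have := (II1 c (2*a) (2*b)).comp_mul_left (c := 2)
  simpa using this

lemma hasDerivAt_neg_sqrt (c r : ℝ) (h : c - 2*r ≠ 0) :
    HasDerivAt (fun r => -Real.sqrt (c - 2*r)) ((Real.sqrt (c - 2*r))⁻¹) r := by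
  have hu : HasDerivAt (fun r : ℝ => c - 2*r) (-2) r := by
    simpa using ((hasDerivAt_id r).const_mul (2:ℝ)).const_sub c
  have := ((Real.hasDerivAt_sqrt h).comp r hu).neg
  refine this.congr_deriv ?_
  ring

lemma int_sqrt (a b c : ℝ) (hab : a ≤ b) (hb : 2*b ≤ c) :
    ∫ r in a..b, (Real.sqrt (c - 2*r))⁻¹ = Real.sqrt (c - 2*a) - Real.sqrt (c - 2*b) := by
  have := intervalIntegral.integral_eq_sub_of_hasDeriv_right_of_le hab
    (f := fun r => -Real.sqrt (c - 2*r)) (f' := fun r => (Real.sqrt (c - 2*r))⁻¹)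
    (by fun_prop)
    (fun x hx => (hasDerivAt_neg_sqrt c x (by nlinarith [hx.2])).hasDerivWithinAt)
    (II2 c a b)
  rw [this]; ring

lemma one_sub_exp_le (u : ℝ) (hu : 0 ≤ u) : 1 - Real.exp (-u) ≤ 2*u/(1+u) := by
  have h1 : 1 - u ≤ Real.exp (-u) := by linarith [Real.add_one_le_exp (-u)]
  have key : 1 - u ≤ (1+u) * Real.exp (-u) := by
    rcases le_or_gt u 1 with h | h
    · nlinarith [Real.exp_pos (-u)]
    · nlinarith [Real.exp_pos (-u)]
  rw [le_div_iff₀ (by linarith : (0:ℝ) < 1 + u)]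
  nlinarith

lemma pointwise_key (v z : ℝ) (hv : 0 ≤ v) :
    2 * (Real.sqrt v)⁻¹ * Real.exp (-z^2/(2*v)) ≥
      2 * (Real.sqrt v)⁻¹ - 4*z^2/(Real.sqrt v*(2*v+z^2)) := by
  rcases eq_or_lt_of_le hv with h | h
  · simp [← h]
  · have hsv : 0 < Real.sqrt v := Real.sqrt_pos.mpr h
    have hu : 0 ≤ z^2/(2*v) := by positivity
    have := one_sub_exp_le (z^2/(2*v)) hu
    have hre : -z^2/(2*v) = -(z^2/(2*v)) := by ring
    rw [ge_iff_le, hre]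
    have h2 : 2*(z^2/(2*v))/(1+z^2/(2*v)) = 2*z^2/(2*v+z^2) := by
      rw [div_eq_div_iff (by positivity) (by positivity)]
      field_simp
    have h3 : 2 * (Real.sqrt v)⁻¹ * (1 - Real.exp (-(z^2/(2*v)))) ≤
        2 * (Real.sqrt v)⁻¹ * (2*z^2/(2*v+z^2)) := by
      apply mul_le_mul_of_nonneg_left _ (by positivity)
      rw [← h2]; exact this
    have h4 : 2 * (Real.sqrt v)⁻¹ * (2*z^2/(2*v+z^2)) = 4*z^2/(Real.sqrt v*(2*v+z^2)) := by
      field_simp; ring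
    nlinarith [h3, h4]

lemma phi_nonneg (v z : ℝ) (hv : 0 ≤ v) : 0 ≤ 4*z^2/(Real.sqrt v*(2*v+z^2)) := by positivity

lemma phi_le (v z : ℝ) (hv : 0 ≤ v) :
    4*z^2/(Real.sqrt v*(2*v+z^2)) ≤ 4*(Real.sqrt v)⁻¹ := by
  rcases eq_or_ne (Real.sqrt v*(2*v+z^2)) 0 with h | h
  · rw [h, div_zero]; positivity
  · have hsv : 0 < Real.sqrt v := by
      rcases (mul_ne_zero_iff.mp h).1.lt_or_gt with h' | h'
      · exact absurd (Real.sqrt_nonneg v) (not_le.mpr h')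
      · exact h'
    have hd : 0 < 2*v+z^2 := by
      rcases (mul_ne_zero_iff.mp h).2.lt_or_gt with h' | h'
      · nlinarith
      · exact h'
    rw [div_le_iff₀ (by positivity)]
    have : (Real.sqrt v)⁻¹ * Real.sqrt v = 1 := inv_mul_cancel₀ hsv.ne'
    nlinarith

lemma II_phi (s t z : ℝ) (h0 : 0 ≤ s) (hst : s ≤ t) :
    IntervalIntegrable (fun r => 4*z^2/(Real.sqrt (t+s-2*r)*(2*(t+s-2*r)+z^2)))
      volume 0 s := by
  apply IntervalIntegrable.mono_fun' ((II2 (t+s) 0 s).const_mul 4)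
  · exact (measurable_const.div (by continuity :
      Continuous fun r:ℝ => Real.sqrt (t+s-2*r)*(2*(t+s-2*r)+z^2)).measurable).aestronglyMeasurable
  · filter_upwards [ae_restrict_mem measurableSet_uIoc] with r hr
    rw [Set.uIoc_of_le h0] at hr
    have hv : 0 ≤ t + s - 2*r := by have := hr.2; linarith
    rw [Real.norm_eq_abs, abs_of_nonneg (phi_nonneg _ _ hv)]
    exact phi_le _ _ hv

lemma int_phi_le (s t z : ℝ) (h0 : 0 ≤ s) (hst : s ≤ t) :
    ∫ r in (0:ℝ)..s, 4*z^2/(Real.sqrt (t+s-2*r)*(2*(t+s-2*r)+z^2)) ≤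
      Real.sqrt 2 * π * |z| := by
  rcases eq_or_ne z 0 with rfl | hz
  · simp
  · have habs : 0 < |z| := abs_pos.mpr hz
    have key : ∫ r in (0:ℝ)..s, 4*z^2/(Real.sqrt (t+s-2*r)*(2*(t+s-2*r)+z^2)) =
        (-(2*Real.sqrt 2*|z|) * Real.arctan (Real.sqrt (2*(t+s-2*s))/|z|)) -
        (-(2*Real.sqrt 2*|z|) * Real.arctan (Real.sqrt (2*(t+s-2*0))/|z|)) := by
      apply intervalIntegral.integral_eq_sub_of_hasDeriv_right_of_le h0
        (f := fun r => -(2*Real.sqrt 2*|z|) * Real.arctan (Real.sqrt (2*(t+s-2*r))/|z|))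
      · exact (continuous_const.mul (Real.continuous_arctan.comp
          ((Real.continuous_sqrt.comp (by continuity)).div_const _))).continuousOn
      · intro x hx
        have hv : 0 < t + s - 2*x := by have := hx.2; linarith
        set v := t + s - 2*x with hvdef
        have h1 : HasDerivAt (fun r : ℝ => 2*(t+s-2*r)) (-4) x := by
          have : HasDerivAt (fun r : ℝ => t+s-2*r) (-2) x := by
            simpa using ((hasDerivAt_id x).const_mul (2:ℝ)).const_sub (t+s)
          exact (this.const_mul (2:ℝ)).congr_deriv (by norm_num)
        have h2 := (Real.hasDerivAt_sqrt (x := 2*v) (by positivity)).comp x h1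
        have h3 := h2.div_const |z|
        have h4 := (Real.hasDerivAt_arctan (Real.sqrt (2*v)/|z|)).comp x h3
        have h5 := h4.const_mul (-(2*Real.sqrt 2*|z|))
        apply HasDerivAt.hasDerivWithinAt
        refine h5.congr_deriv ?_
        symm
        have hsv : 0 < Real.sqrt v := Real.sqrt_pos.mpr hv
        have hs2v : Real.sqrt (2*v) = Real.sqrt 2 * Real.sqrt v :=
          Real.sqrt_mul (by norm_num) v
        have hsq : Real.sqrt (2*v) ^ 2 = 2*v := Real.sq_sqrt (by positivity)
        have hz2 : |z|^2 = z^2 := sq_abs z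
        have hs2 : (0:ℝ) < Real.sqrt 2 := by positivity
        have e1 : (Real.sqrt 2*Real.sqrt v)^2 = 2*v := by
          rw [mul_pow, Real.sq_sqrt (by norm_num : (0:ℝ) ≤ 2), Real.sq_sqrt hv.le]
        rw [hs2v]
        field_simp
        rw [Real.sq_sqrt hv.le, Real.sq_sqrt (by norm_num : (0:ℝ) ≤ 2), hz2]
        ring
      · exact II_phi s t z h0 hst
    rw [key]
    have ha1 : (0:ℝ) ≤ Real.arctan (Real.sqrt (2*(t+s-2*s))/|z|) := by
      rw [← Real.arctan_zero]
      exact Real.arctan_strictMono.monotone (by positivity)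
    have ha2 : Real.arctan (Real.sqrt (2*(t+s-2*0))/|z|) ≤ π/2 :=
      (Real.arctan_lt_pi_div_two _).le
    have hs2 : (0:ℝ) < Real.sqrt 2 := by positivity
    have h6 : 2*Real.sqrt 2*|z| * Real.arctan (Real.sqrt (2*(t+s-2*0))/|z|) ≤
        2*Real.sqrt 2*|z| * (π/2) := mul_le_mul_of_nonneg_left ha2 (by positivity)
    have h7 : 0 ≤ 2*Real.sqrt 2*|z| * Real.arctan (Real.sqrt (2*(t+s-2*s))/|z|) :=
      mul_nonneg (by positivity) ha1
    have h8 : 2*Real.sqrt 2*(abs z)*(π/2) = Real.sqrt 2 * π * (abs z) := by ring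
    nlinarith

lemma sqrt_sum_le (t s : ℝ) (ht : 0 ≤ t) (hs : 0 ≤ s) :
    Real.sqrt (2*t) + Real.sqrt (2*s) ≤ 2*Real.sqrt (t+s) := by
  have key2 : ((Real.sqrt t + Real.sqrt s)^2) ≤ 2*(t+s) := by
    nlinarith [Real.sq_sqrt ht, Real.sq_sqrt hs, sq_nonneg (Real.sqrt t - Real.sqrt s)]
  have h1 : Real.sqrt t + Real.sqrt s ≤ Real.sqrt (2*(t+s)) := by
    calc Real.sqrt t + Real.sqrt s = Real.sqrt ((Real.sqrt t + Real.sqrt s)^2) :=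
          (Real.sqrt_sq (by positivity)).symm
      _ ≤ Real.sqrt (2*(t+s)) := Real.sqrt_le_sqrt key2
  have h2 : Real.sqrt (2*t) = Real.sqrt 2 * Real.sqrt t := Real.sqrt_mul (by norm_num) t
  have h3 : Real.sqrt (2*s) = Real.sqrt 2 * Real.sqrt s := Real.sqrt_mul (by norm_num) s
  have h4 : Real.sqrt (2*(t+s)) = Real.sqrt 2 * Real.sqrt (t+s) :=
    Real.sqrt_mul (by norm_num) (t+s)
  have h5 : Real.sqrt 2 * Real.sqrt 2 = 2 := Real.mul_self_sqrt (by norm_num)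
  have hs2 : (0:ℝ) < Real.sqrt 2 := by positivity
  calc Real.sqrt (2*t) + Real.sqrt (2*s) = Real.sqrt 2 * (Real.sqrt t + Real.sqrt s) := by
        rw [h2, h3]; ring
    _ ≤ Real.sqrt 2 * Real.sqrt (2*(t+s)) := by
        exact mul_le_mul_of_nonneg_left h1 hs2.le
    _ = 2*Real.sqrt (t+s) := by rw [h4, ← mul_assoc, h5]

/-- The function `Δ(s,t,z)`. -/
noncomputable def heatDelta (s t z : ℝ) : ℝ :=
  ∫ r in Set.Ioc (0 : ℝ) s,
    ((Real.sqrt (2 * (t - r)))⁻¹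
      - 2 * (Real.sqrt (t + s - 2 * r))⁻¹ * Real.exp (-z ^ 2 / (2 * (t + s - 2 * r)))
      + (Real.sqrt (2 * (s - r)))⁻¹)

lemma heatDelta_le (s t z : ℝ) (hs : 0 < s) (hst : s ≤ t) :
    heatDelta s t z ≤ (2 - Real.sqrt 2) * Real.sqrt (t-s) + Real.sqrt 2 * π * |z| := by
  have h0s : (0:ℝ) ≤ s := hs.le
  have hf1 : IntervalIntegrable (fun r => (Real.sqrt (2*(t-r)))⁻¹) volume 0 s := by
    simpa only [mul_sub] using II2 (2*t) 0 s
  have hf3 : IntervalIntegrable (fun r => (Real.sqrt (2*(s-r)))⁻¹) volume 0 s := by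
    simpa only [mul_sub] using II2 (2*s) 0 s
  have hfw : IntervalIntegrable (fun r => (Real.sqrt (t+s-2*r))⁻¹) volume 0 s := II2 (t+s) 0 s
  have hfe : IntervalIntegrable
      (fun r => 2 * (Real.sqrt (t+s-2*r))⁻¹ * Real.exp (-z^2/(2*(t+s-2*r)))) volume 0 s := by
    apply IntervalIntegrable.mono_fun' (hfw.const_mul 2)
    · apply Measurable.aestronglyMeasurable
      exact (measurable_const.mul
        ((Real.continuous_sqrt.comp (by continuity)).measurable.inv)).mul
        (Real.measurable_exp.comp (measurable_const.div
          (by continuity : Continuous fun r:ℝ => 2*(t+s-2*r)).measurable))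
    · filter_upwards [ae_restrict_mem measurableSet_uIoc] with r hr
      rw [Set.uIoc_of_le h0s] at hr
      have hv : 0 ≤ t + s - 2*r := by have := hr.2; linarith
      have he : Real.exp (-z^2/(2*(t+s-2*r))) ≤ 1 := by
        rw [Real.exp_le_one_iff]
        rcases eq_or_lt_of_le hv with h | h
        · rw [← h]; simp
        · rw [div_nonpos_iff]; right; exact ⟨by nlinarith [sq_nonneg z], by linarith⟩
      have hnn : (0:ℝ) ≤ 2 * (Real.sqrt (t+s-2*r))⁻¹ := by positivity
      rw [Real.norm_eq_abs, abs_of_nonneg (by positivity)]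
      calc 2 * (Real.sqrt (t+s-2*r))⁻¹ * Real.exp (-z^2/(2*(t+s-2*r))) ≤
            2 * (Real.sqrt (t+s-2*r))⁻¹ * 1 := mul_le_mul_of_nonneg_left he hnn
        _ = 2 * (Real.sqrt (t+s-2*r))⁻¹ := mul_one _
  have hphi := II_phi s t z h0s hst
  have hF : IntervalIntegrable (fun r => (Real.sqrt (2*(t-r)))⁻¹ + (Real.sqrt (2*(s-r)))⁻¹
      - 2*(Real.sqrt (t+s-2*r))⁻¹
      + 4*z^2/(Real.sqrt (t+s-2*r)*(2*(t+s-2*r)+z^2))) volume 0 s :=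
    ((hf1.add hf3).sub (hfw.const_mul 2)).add hphi
  have hf : IntervalIntegrable (fun r => (Real.sqrt (2*(t-r)))⁻¹
      - 2 * (Real.sqrt (t+s-2*r))⁻¹ * Real.exp (-z^2/(2*(t+s-2*r)))
      + (Real.sqrt (2*(s-r)))⁻¹) volume 0 s := (hf1.sub hfe).add hf3
  have step1 : heatDelta s t z = ∫ r in (0:ℝ)..s,
      ((Real.sqrt (2*(t-r)))⁻¹
        - 2 * (Real.sqrt (t+s-2*r))⁻¹ * Real.exp (-z^2/(2*(t+s-2*r)))
        + (Real.sqrt (2*(s-r)))⁻¹) := by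
    rw [heatDelta, intervalIntegral.integral_of_le h0s]
  have step2 : heatDelta s t z ≤ ∫ r in (0:ℝ)..s,
      ((Real.sqrt (2*(t-r)))⁻¹ + (Real.sqrt (2*(s-r)))⁻¹ - 2*(Real.sqrt (t+s-2*r))⁻¹
        + 4*z^2/(Real.sqrt (t+s-2*r)*(2*(t+s-2*r)+z^2))) := by
    rw [step1]
    apply intervalIntegral.integral_mono_on h0s hf hF
    intro r hr
    have hv : 0 ≤ t + s - 2*r := by have := hr.2; linarith
    have := pointwise_key (t+s-2*r) z hv
    linarith
  have i1 : ∫ r in (0:ℝ)..s, (Real.sqrt (2*(t-r)))⁻¹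
      = Real.sqrt (2*t) - Real.sqrt (2*(t-s)) := by
    have := int_sqrt 0 s (2*t) h0s (by linarith)
    simp only [mul_sub] at *
    simpa using this
  have i3 : ∫ r in (0:ℝ)..s, (Real.sqrt (2*(s-r)))⁻¹ = Real.sqrt (2*s) := by
    have := int_sqrt 0 s (2*s) h0s (by linarith)
    simp only [mul_sub] at *
    simpa using this
  have iw : ∫ r in (0:ℝ)..s, (Real.sqrt (t+s-2*r))⁻¹
      = Real.sqrt (t+s) - Real.sqrt (t-s) := by
    have := int_sqrt 0 s (t+s) h0s (by linarith)
    rw [show t+s-2*s = t-s by ring] at this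
    simpa using this
  have iphi := int_phi_le s t z h0s hst
  have split : ∫ r in (0:ℝ)..s,
      ((Real.sqrt (2*(t-r)))⁻¹ + (Real.sqrt (2*(s-r)))⁻¹ - 2*(Real.sqrt (t+s-2*r))⁻¹
        + 4*z^2/(Real.sqrt (t+s-2*r)*(2*(t+s-2*r)+z^2)))
      = ((∫ r in (0:ℝ)..s, (Real.sqrt (2*(t-r)))⁻¹)
          + (∫ r in (0:ℝ)..s, (Real.sqrt (2*(s-r)))⁻¹)
          - 2 * ∫ r in (0:ℝ)..s, (Real.sqrt (t+s-2*r))⁻¹)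
        + ∫ r in (0:ℝ)..s, 4*z^2/(Real.sqrt (t+s-2*r)*(2*(t+s-2*r)+z^2)) := by
    rw [intervalIntegral.integral_add ((hf1.add hf3).sub (hfw.const_mul 2)) hphi,
      intervalIntegral.integral_sub (hf1.add hf3) (hfw.const_mul 2),
      intervalIntegral.integral_add hf1 hf3, intervalIntegral.integral_const_mul]
  have hsum := sqrt_sum_le t s (by linarith) h0s
  have hsplit2 : Real.sqrt (2*(t-s)) = Real.sqrt 2 * Real.sqrt (t-s) :=
    Real.sqrt_mul (by norm_num) _
  rw [split, i1, i3, iw] at step2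
  calc heatDelta s t z ≤ _ := step2
    _ ≤ (2 - Real.sqrt 2) * Real.sqrt (t-s) + Real.sqrt 2 * π * |z| := by
        rw [hsplit2] at *
        linarith

/-- There is `C > 0` such that for all `t ≥ s > 0` and `x, y ∈ ℝ`,
`E[(u(t,x)-u(s,y))²] = (1/√(2π))(√(2(t-s)) + Δ(s,t,x-y)) ≤ C(√(t-s) + |x-y|)`. -/
theorem stmt_2 :
    ∃ C > (0 : ℝ), ∀ t s x y : ℝ, 0 < s → s ≤ t →
      (Real.sqrt (2 * π))⁻¹ * (Real.sqrt (2 * (t - s)) + heatDelta s t (x - y)) ≤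
        C * (Real.sqrt (t - s) + |x - y|) := by
  refine ⟨8, by norm_num, fun t s x y hs hst => ?_⟩
  set z := x - y with hz
  have hD := heatDelta_le s t z hs hst
  have hsplit2 : Real.sqrt (2*(t-s)) = Real.sqrt 2 * Real.sqrt (t-s) :=
    Real.sqrt_mul (by norm_num) _
  set X := Real.sqrt (2 * (t - s)) + heatDelta s t z with hX
  have hXle : X ≤ 2 * Real.sqrt (t-s) + Real.sqrt 2 * π * |z| := by
    rw [hX, hsplit2]; linarith
  have hs2le : Real.sqrt 2 ≤ 2 := by
    nlinarith [Real.sq_sqrt (by norm_num : (0:ℝ) ≤ 2), Real.sqrt_nonneg 2]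
  have hpi : π ≤ 4 := Real.pi_le_four
  have hRHS : 2 * Real.sqrt (t-s) + Real.sqrt 2 * π * |z| ≤
      8 * (Real.sqrt (t-s) + |z|) := by
    have h1 : Real.sqrt 2 * π ≤ 8 := by
      nlinarith [Real.sqrt_nonneg 2, Real.pi_pos]
    nlinarith [Real.sqrt_nonneg (t-s), abs_nonneg z, Real.pi_pos, Real.sqrt_nonneg 2]
  rcases le_or_gt X 0 with hX0 | hX0
  · have : (Real.sqrt (2*π))⁻¹ * X ≤ 0 :=
      mul_nonpos_of_nonneg_of_nonpos (by positivity) hX0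
    have : (0:ℝ) ≤ 8 * (Real.sqrt (t-s) + |z|) := by positivity
    linarith
  · have hinv : (Real.sqrt (2*π))⁻¹ ≤ 1 := by
      rw [inv_le_one_iff₀]
      right
      rw [show (1:ℝ) = Real.sqrt 1 by simp]
      exact Real.sqrt_le_sqrt (by nlinarith [Real.pi_gt_three])
    calc (Real.sqrt (2*π))⁻¹ * X ≤ 1 * X :=
          mul_le_mul_of_nonneg_right hinv hX0.le
      _ = X := one_mul _
      _ ≤ 2 * Real.sqrt (t-s) + Real.sqrt 2 * π * |z| := hXle
      _ ≤ 8 * (Real.sqrt (t-s) + |z|) := hRHS
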